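/- Let p and q be coprime integers with p > q ≥ 2, and let x, y, u, v be the unique positive integers with p = x + y, q = u + v, and v·x − u·y = 1. Then the polynomial (X^{pq} − 1)·(X − 1)/((X^p − 1)·(X^q − 1)) in ℤ[X] has exactly 2·v·x − 1 nonzero coefficients. -/

import Mathlib

namespace TorusAux

/-- `n` is a "gap" of the numerical semigroup generated by `p` and `q`:
it can be written as `i*p - k*q` with `0 ≤ i < q` and `k ≥ 1`. -/
def Gp (p q n : ℕ) : Prop := ∃ i k, i < q ∧ 1 ≤ k ∧ n + k * q = i * p

open Polynomial Finset

/-- The finite set of gaps of the numerical semigroup generated by `p` and `q`. -/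
def gapSet (p q : ℕ) : Finset ℕ :=
  (range q).biUnion fun i => (range (i * p / q)).image fun j => i * p % q + j * q

lemma eq_of_modeq {p q : ℕ} (hcop : Nat.Coprime p q) {i₁ i₂ : ℕ} (h1 : i₁ < q) (h2 : i₂ < q)
    (h : i₁ * p % q = i₂ * p % q) : i₁ = i₂ := by
  have h' : i₁ % q = i₂ % q := Nat.ModEq.cancel_right_of_coprime hcop.symm h
  rwa [Nat.mod_eq_of_lt h1, Nat.mod_eq_of_lt h2] at h'

lemma cancel {p q : ℕ} (hcop : Nat.Coprime p q) {i₁ i₂ k₁ k₂ : ℕ} (h1 : i₁ < q) (h2 : i₂ < q)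
    (h : i₁ * p + k₂ * q = i₂ * p + k₁ * q) : i₁ = i₂ ∧ k₁ = k₂ := by
  have hq : 0 < q := lt_of_le_of_lt (Nat.zero_le _) h1
  have hi : i₁ = i₂ := by
    apply eq_of_modeq hcop h1 h2
    have := congrArg (· % q) h
    simpa [Nat.add_mul_mod_self_right] using this
  subst hi
  refine ⟨rfl, ?_⟩
  have := Nat.add_left_cancel h
  exact (Nat.eq_of_mul_eq_mul_right hq this).symm

lemma not_both {p q : ℕ} (hcop : Nat.Coprime p q) (hp : 0 < p) {n : ℕ} :
    ¬ (Gp p q n ∧ (∃ a b, n = a * p + b * q)) := by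
  rintro ⟨⟨i, k, hi, hk, he⟩, ⟨a, b, hs⟩⟩
  rcases lt_or_ge a q with ha | ha
  · have h : a * p + (b + k) * q = i * p + 0 * q := by
      rw [zero_mul, add_zero, add_mul, ← add_assoc, ← hs, he]
    obtain ⟨-, hk0⟩ := cancel hcop ha hi h
    omega
  · have h1 : i * p < q * p := Nat.mul_lt_mul_of_lt_of_le hi le_rfl hp
    have h2 : q * p ≤ a * p := Nat.mul_le_mul_right p ha
    have h3 : i * p = a * p + b * q + k * q := by rw [← he, hs]
    have h4 := Nat.zero_le (b * q)
    have h5 := Nat.zero_le (k * q)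
    linarith

lemma mem_gapSet {p q n : ℕ} (hq : 0 < q) : n ∈ gapSet p q ↔ Gp p q n := by
  simp only [gapSet, mem_biUnion, mem_image, mem_range]
  constructor
  · rintro ⟨i, hi, j, hj, rfl⟩
    refine ⟨i, i * p / q - j, hi, by omega, ?_⟩
    have hj' : j + (i * p / q - j) = i * p / q := by omega
    calc i * p % q + j * q + (i * p / q - j) * q
        = i * p % q + (j + (i * p / q - j)) * q := by rw [add_mul]; ring
      _ = i * p % q + i * p / q * q := by rw [hj']
      _ = i * p := Nat.mod_add_div' _ _
  · rintro ⟨i, k, hi, hk, he⟩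
    refine ⟨i, hi, n / q, ?_, ?_⟩
    · have h : (n / q + 1) * q ≤ i * p := by
        have h1 : n / q * q ≤ n := Nat.div_mul_le_self n q
        have h2 : q ≤ k * q := Nat.le_mul_of_pos_left q hk
        calc (n / q + 1) * q = n / q * q + q := by ring
          _ ≤ n + k * q := by omega
          _ = i * p := he
      have := (Nat.le_div_iff_mul_le hq).mpr h
      omega
    · have hmod : n % q = i * p % q := by rw [← he, Nat.add_mul_mod_self_right]
      rw [← hmod]
      exact Nat.mod_add_div' n q

lemma geom_block (r a s : ℕ) :
    ((X : ℤ[X]) ^ s - 1) * ∑ j ∈ range a, X ^ (r + j * s) = X ^ (r + a * s) - X ^ r := by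
  have h : ∑ j ∈ range a, (X : ℤ[X]) ^ (r + j * s) = X ^ r * ∑ j ∈ range a, (X ^ s) ^ j := by
    rw [Finset.mul_sum]
    refine Finset.sum_congr rfl fun j _ => ?_
    rw [pow_add, mul_comm j s, pow_mul]
  rw [h]
  calc ((X : ℤ[X]) ^ s - 1) * (X ^ r * ∑ j ∈ range a, (X ^ s) ^ j)
      = X ^ r * ((∑ j ∈ range a, ((X : ℤ[X]) ^ s) ^ j) * (X ^ s - 1)) := by ring
    _ = X ^ r * ((X ^ s) ^ a - 1) := by rw [geom_sum_mul]
    _ = X ^ (r + a * s) - X ^ r := by rw [pow_add, mul_comm a s, pow_mul]; ring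

lemma gap_sum {p q : ℕ} (hcop : Nat.Coprime p q) (hq : 0 < q) :
    ∑ n ∈ gapSet p q, (X : ℤ[X]) ^ n
      = ∑ i ∈ range q, ∑ j ∈ range (i * p / q), X ^ (i * p % q + j * q) := by
  rw [gapSet, Finset.sum_biUnion]
  · refine Finset.sum_congr rfl fun i _ => ?_
    rw [Finset.sum_image]
    intro j₁ _ j₂ _ h
    have : j₁ * q = j₂ * q := by simp only at h; omega
    exact Nat.eq_of_mul_eq_mul_right hq this
  · intro i₁ hi₁ i₂ hi₂ hne
    simp only [coe_range, Set.mem_Iio] at hi₁ hi₂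
    refine Finset.disjoint_left.mpr ?_
    rintro n hn₁ hn₂
    simp only [mem_image, mem_range] at hn₁ hn₂
    obtain ⟨j₁, -, he₁⟩ := hn₁
    obtain ⟨j₂, -, he₂⟩ := hn₂
    apply hne
    apply eq_of_modeq hcop hi₁ hi₂
    have h1 : i₁ * p % q % q = i₂ * p % q % q := by
      have h := he₁.trans he₂.symm
      have := congrArg (· % q) h
      simpa [Nat.add_mul_mod_self_right] using this
    rwa [Nat.mod_mod_of_dvd _ dvd_rfl, Nat.mod_mod_of_dvd _ dvd_rfl] at h1

lemma resid {p q v y : ℕ} (hvp : v * p = y * q + 1) (hq : 0 < q) :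
    ∑ i ∈ range q, (X : ℤ[X]) ^ (i * p % q) = ∑ i ∈ range q, X ^ i := by
  have key : ∀ m, m * (v * p) % q = m % q := by
    intro m
    rw [hvp]
    have : m * (y * q + 1) = m + m * y * q := by ring
    rw [this, Nat.add_mul_mod_self_right]
  refine Finset.sum_bij' (fun i _ => i * p % q) (fun j _ => j * v % q) ?_ ?_ ?_ ?_ ?_
  · intro a ha; exact mem_range.mpr (Nat.mod_lt _ hq)
  · intro a ha; exact mem_range.mpr (Nat.mod_lt _ hq)
  · intro a ha
    show a * p % q * v % q = a
    rw [Nat.mod_mul_mod]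
    have : a * p * v = a * (v * p) := by ring
    rw [this, key, Nat.mod_eq_of_lt (mem_range.mp ha)]
  · intro a ha
    show a * v % q * p % q = a
    rw [Nat.mod_mul_mod]
    have : a * v * p = a * (v * p) := by ring
    rw [this, key, Nat.mod_eq_of_lt (mem_range.mp ha)]
  · intro a ha; rfl

lemma key' (p q : ℕ) :
    ∑ i ∈ range q, (X:ℤ[X])^(i*p)
      = ∑ i ∈ range q, X^(i*p % q)
        + ((X:ℤ[X])^q - 1) * ∑ i ∈ range q, ∑ j ∈ range (i * p / q), X ^ (i * p % q + j * q) := by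
  rw [Finset.mul_sum, ← Finset.sum_add_distrib]
  refine Finset.sum_congr rfl fun i _ => ?_
  rw [geom_block (i*p % q) (i*p/q) q, Nat.mod_add_div' (i*p) q]
  ring

lemma M_ne_zero (p q : ℕ) (hp : 0 < p) (hq : 0 < q) :
    ((X:ℤ[X])^p - 1) * ((X:ℤ[X])^q - 1) ≠ 0 := by
  have h1 : ((X:ℤ[X])^p - 1) ≠ 0 := by simpa using X_pow_sub_C_ne_zero hp (1:ℤ)
  have h2 : ((X:ℤ[X])^q - 1) ≠ 0 := by simpa using X_pow_sub_C_ne_zero hq (1:ℤ)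
  exact mul_ne_zero h1 h2

lemma h1_lem (p q : ℕ) : ((X:ℤ[X])^(p*q) - 1) = (∑ i ∈ range q, X^(i*p)) * (X^p - 1) := by
  have h := geom_sum_mul ((X:ℤ[X])^p) q
  rw [← pow_mul, mul_comm p q] at h
  rw [mul_comm p q, ← h]
  congr 1
  refine Finset.sum_congr rfl fun i _ => ?_
  rw [mul_comm i p, pow_mul]

lemma h3_lem (q : ℕ) : ((X:ℤ[X])^q - 1) = (∑ i ∈ range q, X^i) * (X - 1) :=
  (geom_sum_mul (X:ℤ[X]) q).symm

lemma startChar {p q x y v : ℕ} (hcop : Nat.Coprime p q) (hp : 0 < p)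
    (hvp : v * p = y * q + 1) (hvq : v < q) (hxy : x + y = p) (n : ℕ) :
    (Gp p q (n+1) ∧ ¬ Gp p q n) ↔
      ∃ i k, v ≤ i ∧ i < q ∧ 1 ≤ k ∧ k ≤ y ∧ n + 1 + k * q = i * p := by
  have hvp' : (v:ℤ)*p = y*q+1 := by exact_mod_cast hvp
  have hxy' : (x:ℤ)+y = p := by exact_mod_cast hxy
  constructor
  · rintro ⟨⟨i, k, hi, hk, he⟩, hng⟩
    have he' : (n:ℤ) + 1 + k*q = i*p := by exact_mod_cast he
    have hvi : v ≤ i := by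
      by_contra hlt
      push_neg at hlt
      refine hng ⟨i + q - v, k + x, by omega, by omega, ?_⟩
      zify [show v ≤ i + q from by omega]
      linear_combination he' + hvp' + (q:ℤ)*hxy'
    have hky : k ≤ y := by
      by_contra hgt
      push_neg at hgt
      refine hng ⟨i - v, k - y, by omega, by omega, ?_⟩
      zify [hvi, show y ≤ k from by omega]
      linear_combination he' + hvp'
    exact ⟨i, k, hvi, hi, hk, hky, he⟩
  · rintro ⟨i, k, hvi, hi, hk, hky, he⟩
    have he' : (n:ℤ) + 1 + k*q = i*p := by exact_mod_cast he
    refine ⟨⟨i, k, hi, hk, he⟩, fun hg => not_both hcop hp ⟨hg, i - v, y - k, ?_⟩⟩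
    zify [hvi, hky]
    linear_combination he' + hvp'

lemma endChar {p q x y u v : ℕ} (hcop : Nat.Coprime p q) (hp : 0 < p)
    (hvp : v * p = y * q + 1) (hup : u * p + 1 = x * q) (huv : u + v = q)
    (hxy : x + y = p) (n : ℕ) :
    (Gp p q n ∧ ¬ Gp p q (n+1)) ↔
      ∃ i k, u ≤ i ∧ i < q ∧ 1 ≤ k ∧ k ≤ x ∧ ¬(i = u ∧ k = x) ∧ n + k * q = i * p := by
  have hvp' : (v:ℤ)*p = y*q+1 := by exact_mod_cast hvp
  have hup' : (u:ℤ)*p + 1 = x*q := by exact_mod_cast hup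
  constructor
  · rintro ⟨⟨i, k, hi, hk, he⟩, hng⟩
    have he' : (n:ℤ) + k*q = i*p := by exact_mod_cast he
    have hui : u ≤ i := by
      by_contra hlt
      push_neg at hlt
      refine hng ⟨i + v, k + y, by omega, by omega, ?_⟩
      zify
      linear_combination he' - hvp'
    have hkx : k ≤ x := by
      by_contra hgt
      push_neg at hgt
      refine hng ⟨i - u, k - x, by omega, by omega, ?_⟩
      zify [hui, show x ≤ k from by omega]
      linear_combination he' + hup'
    refine ⟨i, k, hui, hi, hk, hkx, ?_, he⟩
    rintro ⟨rfl, rfl⟩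
    have : (n:ℤ) ≥ 0 := Int.natCast_nonneg n
    linarith [he', hup']
  · rintro ⟨i, k, hui, hi, hk, hkx, hne, he⟩
    have he' : (n:ℤ) + k*q = i*p := by exact_mod_cast he
    refine ⟨⟨i, k, hi, hk, he⟩, fun hg => not_both hcop hp ⟨hg, i - u, x - k, ?_⟩⟩
    zify [hui, hkx]
    linear_combination he' + hup'

end TorusAux

open TorusAux in
open Polynomial Finset in
/-- For coprime `p > q ≥ 2` with the unique decomposition `p = x + y`, `q = u + v`,
`v·x − u·y = 1` into positive integers, the Alexander polynomial
`(X^{pq} − 1)(X − 1)/((X^p − 1)(X^q − 1))` of the `(p,q)`-torus knot has exactly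
`2·v·x − 1` nonzero coefficients. -/
theorem torus_alexander_support_card (p q x y u v : ℕ) (hcop : Nat.Coprime p q)
    (hq : 2 ≤ q) (hpq : q < p)
    (hx : 0 < x) (hy : 0 < y) (hu : 0 < u) (hv : 0 < v)
    (hpxy : p = x + y) (hquv : q = u + v)
    (hdet : (v : ℤ) * x - u * y = 1)
    (Δ : ℤ[X])
    (hΔ : Δ * (((X : ℤ[X]) ^ p - 1) * (X ^ q - 1)) = (X ^ (p * q) - 1) * (X - 1)) :
    Δ.support.card = 2 * v * x - 1 := by
  have hp : 0 < p := by omega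
  have hq0 : 0 < q := by omega
  have hxy : x + y = p := hpxy.symm
  have huv : u + v = q := hquv.symm
  have hvq : v < q := by omega
  have huq : u < q := by omega
  have hvp : v * p = y * q + 1 := by
    have h : (v:ℤ) * p = y * q + 1 := by
      rw [hpxy, hquv]; push_cast; linear_combination hdet
    exact_mod_cast h
  have hup : u * p + 1 = x * q := by
    have h : (u:ℤ) * p + 1 = x * q := by
      rw [hpxy, hquv]; push_cast; linear_combination -hdet
    exact_mod_cast h
  -- identify Δ
  set F : ℤ[X] := ∑ n ∈ gapSet p q, X ^ n with hF
  have hkey : ∑ i ∈ range q, (X:ℤ[X])^(i*p)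
      = (∑ i ∈ range q, X^i) + ((X:ℤ[X])^q - 1) * F := by
    rw [key' p q, resid hvp hq0, hF, gap_sum hcop hq0]
  have hΔ' : (1 + ((X:ℤ[X]) - 1) * F) * (((X : ℤ[X]) ^ p - 1) * (X ^ q - 1))
      = (X ^ (p * q) - 1) * (X - 1) := by
    rw [h1_lem p q, hkey, h3_lem q]; ring
  have hΔeq : Δ = 1 + ((X:ℤ[X]) - 1) * F :=
    mul_right_cancel₀ (M_ne_zero p q hp hq0) (hΔ.trans hΔ'.symm)
  -- coefficients
  have hFc : ∀ m, F.coeff m = if m ∈ gapSet p q then 1 else 0 := by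
    intro m
    rw [hF, finset_sum_coeff]
    simp only [coeff_X_pow]
    exact Finset.sum_ite_eq _ m fun _ => 1
  have h0G : (0:ℕ) ∉ gapSet p q := by
    intro h
    exact not_both hcop hp ⟨(mem_gapSet hq0).mp h, 0, 0, by simp⟩
  have hc0 : Δ.coeff 0 = 1 := by
    rw [hΔeq, coeff_add, coeff_one, mul_coeff_zero, hFc 0, if_neg h0G, mul_zero]
    norm_num
  have hcsucc : ∀ n, Δ.coeff (n+1)
      = (if n ∈ gapSet p q then (1:ℤ) else 0) - (if n+1 ∈ gapSet p q then 1 else 0) := by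
    intro n
    rw [hΔeq, coeff_add, sub_mul, one_mul, coeff_sub, coeff_X_mul, hFc, hFc, coeff_one]
    simp
  -- parameter sets
  set A1 : Finset (ℕ×ℕ) := Finset.Icc v (q-1) ×ˢ Finset.Icc 1 y with hA1def
  set S1 : Finset ℕ := A1.image fun ik => ik.1 * p - ik.2 * q with hS1def
  set A2 : Finset (ℕ×ℕ) := (Finset.Icc u (q-1) ×ˢ Finset.Icc 1 x).erase (u, x) with hA2def
  set S2 : Finset ℕ := A2.image fun ik => ik.1 * p - ik.2 * q + 1 with hS2def
  have hA1mem : ∀ i k, (i,k) ∈ A1 ↔ (v ≤ i ∧ i < q ∧ 1 ≤ k ∧ k ≤ y) := by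
    intro i k
    simp only [hA1def, Finset.mem_product, Finset.mem_Icc]
    omega
  have hA1lt : ∀ i k, (i,k) ∈ A1 → k * q < i * p := by
    intro i k h
    rw [hA1mem] at h
    have h1 : k * q ≤ y * q := Nat.mul_le_mul_right _ h.2.2.2
    have h2 : v * p ≤ i * p := Nat.mul_le_mul_right _ h.1
    linarith [hvp]
  have hA2mem : ∀ i k, (i,k) ∈ A2 ↔ (u ≤ i ∧ i < q ∧ 1 ≤ k ∧ k ≤ x ∧ ¬(i = u ∧ k = x)) := by
    intro i k
    simp only [hA2def, Finset.mem_erase, Finset.mem_product, Finset.mem_Icc, Prod.mk.injEq,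
      ne_eq, not_and]
    omega
  have hA2le : ∀ i k, (i,k) ∈ A2 → k * q ≤ i * p := by
    intro i k h
    rw [hA2mem] at h
    obtain ⟨h1, h2, h3, h4, hne⟩ := h
    by_cases hiu : i = u
    · subst hiu
      have hkx : k + 1 ≤ x := by
        rcases Nat.lt_or_ge k x with h | h
        · omega
        · exact absurd ⟨rfl, by omega⟩ hne
      have := Nat.mul_le_mul_right q hkx
      have e : (k+1)*q = k*q + q := by ring
      linarith [hup]
    · have hi1 : u + 1 ≤ i := by omega
      have t1 : k * q ≤ x * q := Nat.mul_le_mul_right q h4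
      have t2 : (u+1) * p ≤ i * p := Nat.mul_le_mul_right p hi1
      have e : (u+1)*p = u*p + p := by ring
      linarith [hup, hp]
  -- membership characterizations
  have hS1iff : ∀ n, (n+1 ∈ S1) ↔ (Gp p q (n+1) ∧ ¬ Gp p q n) := by
    intro n
    rw [startChar hcop hp hvp hvq hxy n, hS1def, Finset.mem_image]
    constructor
    · rintro ⟨⟨i, k⟩, hm, hval⟩
      have hlt := hA1lt i k hm
      rw [hA1mem] at hm
      refine ⟨i, k, hm.1, hm.2.1, hm.2.2.1, hm.2.2.2, ?_⟩
      exact ((Nat.sub_eq_iff_eq_add hlt.le).mp hval).symm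
    · rintro ⟨i, k, h1, h2, h3, h4, he⟩
      refine ⟨(i, k), (hA1mem i k).mpr ⟨h1, h2, h3, h4⟩, ?_⟩
      have hle : k * q ≤ i * p := by
        rw [← he]; exact Nat.le_add_left _ _
      exact (Nat.sub_eq_iff_eq_add hle).mpr (by rw [← he])
  have hS2iff : ∀ n, (n+1 ∈ S2) ↔ (Gp p q n ∧ ¬ Gp p q (n+1)) := by
    intro n
    rw [endChar hcop hp hvp hup huv hxy n, hS2def, Finset.mem_image]
    constructor
    · rintro ⟨⟨i, k⟩, hm, hval⟩
      have hle := hA2le i k hm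
      rw [hA2mem] at hm
      obtain ⟨h1, h2, h3, h4, hne⟩ := hm
      refine ⟨i, k, h1, h2, h3, h4, hne, ?_⟩
      have hval' : i * p - k * q = n := Nat.add_right_cancel hval
      exact ((Nat.sub_eq_iff_eq_add hle).mp hval').symm
    · rintro ⟨i, k, h1, h2, h3, h4, hne, he⟩
      refine ⟨(i, k), (hA2mem i k).mpr ⟨h1, h2, h3, h4, hne⟩, ?_⟩
      have hle : k * q ≤ i * p := by
        rw [← he]; exact Nat.le_add_left _ _
      have : i * p - k * q = n := (Nat.sub_eq_iff_eq_add hle).mpr (by rw [← he])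
      rw [this]
  have h0S1 : (0:ℕ) ∉ S1 := by
    intro h
    rw [hS1def, Finset.mem_image] at h
    obtain ⟨⟨i, k⟩, hm, hval⟩ := h
    have hlt := hA1lt i k hm
    simp only at hval
    have hle := Nat.sub_eq_zero_iff_le.mp hval
    exact absurd hlt (not_lt.mpr hle)
  have h0S2 : (0:ℕ) ∉ S2 := by
    intro h
    rw [hS2def, Finset.mem_image] at h
    obtain ⟨⟨i, k⟩, hm, hval⟩ := h
    exact Nat.succ_ne_zero _ hval
  -- support
  have hsupp : Δ.support = insert 0 (S1 ∪ S2) := by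
    ext m
    rw [mem_support_iff]
    cases m with
    | zero =>
      simp [hc0]
    | succ n =>
      rw [hcsucc n, Finset.mem_insert, Finset.mem_union, hS1iff n, hS2iff n]
      have hg1 : n ∈ gapSet p q ↔ Gp p q n := mem_gapSet hq0
      have hg2 : n + 1 ∈ gapSet p q ↔ Gp p q (n+1) := mem_gapSet hq0
      by_cases c1 : Gp p q n <;> by_cases c2 : Gp p q (n+1) <;>
        simp [hg1.mpr, hg2.mpr, c1, c2, hg1, hg2]
  -- cardinalities
  have hinj1 : Set.InjOn (fun ik : ℕ × ℕ => ik.1 * p - ik.2 * q) ↑A1 := by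
    rintro ⟨i1, k1⟩ h1 ⟨i2, k2⟩ h2 heq
    simp only at heq
    have l1 := hA1lt i1 k1 h1
    have l2 := hA1lt i2 k2 h2
    have e1 := Nat.sub_add_cancel l1.le
    have e2 := Nat.sub_add_cancel l2.le
    have hm1 := (hA1mem i1 k1).mp h1
    have hm2 := (hA1mem i2 k2).mp h2
    have : i1 * p + k2 * q = i2 * p + k1 * q := by linarith [e1, e2, heq]
    obtain ⟨hi, hk⟩ := cancel hcop hm1.2.1 hm2.2.1 this
    simp [hi, hk]
  have hinj2 : Set.InjOn (fun ik : ℕ × ℕ => ik.1 * p - ik.2 * q + 1) ↑A2 := by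
    rintro ⟨i1, k1⟩ h1 ⟨i2, k2⟩ h2 heq
    simp only [add_left_inj] at heq
    have l1 := hA2le i1 k1 h1
    have l2 := hA2le i2 k2 h2
    have e1 := Nat.sub_add_cancel l1
    have e2 := Nat.sub_add_cancel l2
    have hm1 := (hA2mem i1 k1).mp h1
    have hm2 := (hA2mem i2 k2).mp h2
    have : i1 * p + k2 * q = i2 * p + k1 * q := by linarith [e1, e2, heq]
    obtain ⟨hi, hk⟩ := cancel hcop hm1.2.1 hm2.2.1 this
    simp [hi, hk]
  have hcard1 : S1.card = u * y := by
    rw [hS1def, Finset.card_image_of_injOn hinj1, hA1def, Finset.card_product,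
      Nat.card_Icc, Nat.card_Icc]
    have e1 : q - 1 + 1 - v = u := by omega
    have e2 : y + 1 - 1 = y := by omega
    rw [e1, e2]
  have hcard2 : S2.card = v * x - 1 := by
    have hmem : (u, x) ∈ Finset.Icc u (q-1) ×ˢ Finset.Icc 1 x := by
      simp only [Finset.mem_product, Finset.mem_Icc]
      omega
    rw [hS2def, Finset.card_image_of_injOn hinj2, hA2def, Finset.card_erase_of_mem hmem,
      Finset.card_product, Nat.card_Icc, Nat.card_Icc]
    have e1 : q - 1 + 1 - u = v := by omega
    have e2 : x + 1 - 1 = x := by omega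
    rw [e1, e2]
  have hdisj : Disjoint S1 S2 := by
    rw [Finset.disjoint_left]
    intro m hm1 hm2
    cases m with
    | zero => exact h0S1 hm1
    | succ n =>
      have a1 := (hS1iff n).mp hm1
      have a2 := (hS2iff n).mp hm2
      exact a1.2 a2.1
  have h0notin : (0:ℕ) ∉ S1 ∪ S2 := by
    rw [Finset.mem_union]
    rintro (h | h)
    · exact h0S1 h
    · exact h0S2 h
  rw [hsupp, Finset.card_insert_of_notMem h0notin, Finset.card_union_of_disjoint hdisj,
    hcard1, hcard2]
  have hvx : v * x = u * y + 1 := by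
    have h : (v:ℤ) * x = u * y + 1 := by linear_combination hdet
    exact_mod_cast h
  rw [mul_assoc, hvx]
  obtain ⟨B, hB⟩ : ∃ B, u * y = B := ⟨_, rfl⟩
  rw [hB]
  omega
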